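/- Let M be an n×m (0,1)-matrix of rank m whose unique solution λ of Mλ = 𝟙 has all coordinates nonzero. Then the number of subsets I ⊆ [m] such that z_I(M) has rank m and its solution has all coordinates nonzero equals 2^m − |U(λ)|, where U(λ) = {u ∈ {0,1}^m : u·λ = 1}. -/
import Mathlib


/-- `z_I(M)`: the matrix obtained from `M` by complementing (replacing `a` by `𝟙 − a`)
each column indexed by `I`. -/
def zI {n m : ℕ} (M : Matrix (Fin n) (Fin m) ℝ) (I : Finset (Fin m)) :
    Matrix (Fin n) (Fin m) ℝ :=
  fun i j => if j ∈ I then 1 - M i j else M i j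

/-- The unificators of `λ ∈ ℝ^m`, viewed as subsets `S ⊆ [m]` with `∑_{i∈S} λ_i = 1`. -/
def unifSets (m : ℕ) (l : Fin m → ℝ) : Set (Finset (Fin m)) :=
  {S | ∑ i ∈ S, l i = 1}

open Matrix

noncomputable def zA {m : ℕ} (l : Fin m → ℝ) (I : Finset (Fin m)) : Matrix (Fin m) (Fin m) ℝ :=
  Matrix.diagonal (fun k => if k ∈ I then (-1 : ℝ) else 1) +
    Matrix.replicateCol Unit l * Matrix.replicateRow Unit (fun j => if j ∈ I then (1 : ℝ) else 0)

variable {n m : ℕ} (M : Matrix (Fin n) (Fin m) ℝ) (l : Fin m → ℝ) (I : Finset (Fin m))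

lemma zA_apply (k j : Fin m) :
    zA l I k j = (if k = j then (if j ∈ I then (-1:ℝ) else 1) else 0) +
      l k * (if j ∈ I then 1 else 0) := by
  by_cases h : k = j
  · subst h; simp [zA, Matrix.mul_apply, Matrix.diagonal]
  · simp [zA, Matrix.mul_apply, Matrix.diagonal, h]

lemma zI_eq_mul (hMl : M.mulVec l = 1) : zI M I = M * zA l I := by
  ext i j
  have h1 : ∑ k, M i k * l k = 1 := by
    have := congrFun hMl i
    simpa [Matrix.mulVec, dotProduct] using this
  rw [Matrix.mul_apply]
  simp only [zA_apply, mul_add]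
  rw [Finset.sum_add_distrib]
  have e1 : ∑ k, M i k * (if k = j then (if j ∈ I then (-1:ℝ) else 1) else 0)
      = M i j * (if j ∈ I then (-1:ℝ) else 1) := by
    simp only [mul_ite, mul_zero]
    rw [Finset.sum_ite_eq' Finset.univ j]
    simp
  have e2 : ∑ k, M i k * (l k * (if j ∈ I then (1:ℝ) else 0))
      = (if j ∈ I then (1:ℝ) else 0) := by
    simp only [← mul_assoc]
    rw [← Finset.sum_mul, h1, one_mul]
  rw [e1, e2]
  by_cases hj : j ∈ I <;> simp [zI, hj] <;> ring

lemma zA_det : (zA l I).det =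
    (∏ k : Fin m, (if k ∈ I then (-1:ℝ) else 1)) * (1 - ∑ i ∈ I, l i) := by
  classical
  set d : Fin m → ℝ := fun k => if k ∈ I then (-1:ℝ) else 1 with hd
  set χ : Fin m → ℝ := fun j => if j ∈ I then (1:ℝ) else 0 with hχ
  have hfac : zA l I = Matrix.diagonal d * (1 + Matrix.replicateCol Unit (fun k => d k * l k) *
      Matrix.replicateRow Unit χ) := by
    ext k j
    rw [Matrix.diagonal_mul]
    simp only [Matrix.add_apply, Matrix.one_apply, Matrix.mul_apply, Matrix.replicateCol_apply,
      Matrix.replicateRow_apply, Finset.univ_unique, Finset.sum_singleton]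
    rw [zA_apply]
    by_cases h : k = j
    · subst h
      by_cases hk : k ∈ I <;> simp [hd, hχ, hk] <;> ring
    · by_cases hk : k ∈ I <;> by_cases hj : j ∈ I <;> simp [hd, hχ, h, hk, hj] <;> ring
  rw [hfac, Matrix.det_mul, Matrix.det_diagonal, Matrix.det_one_add_replicateCol_mul_replicateRow]
  congr 1
  have : χ ⬝ᵥ (fun k => d k * l k) = -∑ i ∈ I, l i := by
    simp only [dotProduct, hχ, hd, ite_mul, one_mul, zero_mul]
    rw [Finset.sum_ite_mem, Finset.univ_inter]
    rw [Finset.sum_congr rfl (fun j hj => if_pos hj)]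
    simp [Finset.sum_neg_distrib]
  rw [this]
  ring

lemma zA_mulVec (v : Fin m → ℝ) (k : Fin m) :
    (zA l I).mulVec v k =
      (if k ∈ I then (-1:ℝ) else 1) * v k + l k * ∑ j ∈ I, v j := by
  simp only [Matrix.mulVec, dotProduct, zA_apply, add_mul, ite_mul, zero_mul, one_mul,
    mul_assoc]
  rw [Finset.sum_add_distrib, Finset.sum_ite_eq Finset.univ k]
  simp only [Finset.mem_univ, if_true, ← Finset.mul_sum]
  congr 1
  congr 1
  rw [Finset.sum_ite_mem, Finset.univ_inter]

lemma zA_det_isUnit (hs : ∑ i ∈ I, l i ≠ 1) : IsUnit (zA l I).det := by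
  rw [zA_det]
  refine IsUnit.mul (isUnit_iff_ne_zero.2 ?_) (isUnit_iff_ne_zero.2 (sub_ne_zero.2 (fun h => hs h.symm)))
  apply Finset.prod_ne_zero_iff.2
  intro k _
  by_cases h : k ∈ I <;> simp [h]

theorem stmt14' (n m : ℕ)
    (M : Matrix (Fin n) (Fin m) ℝ) (h01 : ∀ i j, M i j = 0 ∨ M i j = 1)
    (hrk : M.rank = m) (l : Fin m → ℝ) (hMl : M.mulVec l = 1)
    (hlne : ∀ i, l i ≠ 0) :
    {I : Finset (Fin m) | (zI M I).rank = m ∧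
        ∃ μ : Fin m → ℝ, (zI M I).mulVec μ = 1 ∧ ∀ i, μ i ≠ 0}.ncard =
      2 ^ m - {S : Finset (Fin m) | ∑ i ∈ S, l i = 1}.ncard := by
  classical
  have hset : {I : Finset (Fin m) | (zI M I).rank = m ∧
      ∃ μ : Fin m → ℝ, (zI M I).mulVec μ = 1 ∧ ∀ i, μ i ≠ 0}
      = {S : Finset (Fin m) | ∑ i ∈ S, l i = 1}ᶜ := by
    ext I
    simp only [Set.mem_setOf_eq, Set.mem_compl_iff]
    constructor
    · rintro ⟨hr, -⟩ hs
      set v : Fin m → ℝ := fun k => (if k ∈ I then (-1:ℝ) else 1) * l k with hv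
      have hker : (zI M I).mulVec v = 0 := by
        rw [zI_eq_mul M l I hMl, ← Matrix.mulVec_mulVec]
        have hA : (zA l I).mulVec v = 0 := by
          funext k
          rw [zA_mulVec]
          have h2 : ∑ j ∈ I, v j = -1 := by
            rw [hv]
            simp only
            rw [Finset.sum_congr rfl (fun j hj => by rw [if_pos hj])]
            simp [Finset.sum_neg_distrib, hs]
          rw [h2, hv]
          simp only
          by_cases h : k ∈ I <;> simp [h] <;> ring
        rw [hA, Matrix.mulVec_zero]
      have hvne : v ≠ 0 := by
        have hI : I.Nonempty := by
          by_contra h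
          rw [Finset.not_nonempty_iff_eq_empty] at h
          rw [h] at hs
          simpa using hs
        obtain ⟨k, hk⟩ := hI
        intro h0
        have := congrFun h0 k
        simp only [hv, Pi.zero_apply, if_pos hk, neg_mul, one_mul, neg_eq_zero] at this
        exact hlne k this
      have hrank := LinearMap.finrank_range_add_finrank_ker (zI M I).mulVecLin
      have hkpos : 0 < Module.finrank ℝ (LinearMap.ker (zI M I).mulVecLin) := by
        rw [Nat.pos_iff_ne_zero]
        intro h0
        have hbot : LinearMap.ker (zI M I).mulVecLin = ⊥ := Submodule.finrank_eq_zero.1 h0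
        rw [LinearMap.ker_eq_bot] at hbot
        apply hvne
        apply hbot
        show (zI M I).mulVec v = (zI M I).mulVec 0
        rw [hker, Matrix.mulVec_zero]
      rw [Module.finrank_fintype_fun_eq_card, Fintype.card_fin] at hrank
      have hrr : (zI M I).rank = Module.finrank ℝ (LinearMap.range (zI M I).mulVecLin) := rfl
      omega
    · intro hs
      have hu := zA_det_isUnit l I hs
      refine ⟨by rw [zI_eq_mul M l I hMl, Matrix.rank_mul_eq_left_of_isUnit_det _ _ hu, hrk], ?_⟩
      set s := ∑ i ∈ I, l i with hsdef
      have hs1 : (1:ℝ) - s ≠ 0 := sub_ne_zero.2 (fun h => hs h.symm)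
      refine ⟨fun j => (if j ∈ I then (-1:ℝ) else 1) * l j / (1 - s), ?_, ?_⟩
      · rw [zI_eq_mul M l I hMl, ← Matrix.mulVec_mulVec]
        have hA : (zA l I).mulVec (fun j => (if j ∈ I then (-1:ℝ) else 1) * l j / (1 - s)) = l := by
          funext k
          rw [zA_mulVec]
          have h2 : ∑ j ∈ I, (if j ∈ I then (-1:ℝ) else 1) * l j / (1 - s) = -s / (1 - s) := by
            rw [Finset.sum_congr rfl (fun j hj => by rw [if_pos hj])]
            rw [Finset.sum_congr rfl (fun j hj => by ring :
              ∀ j ∈ I, (-1:ℝ) * l j / (1 - s) = -(l j / (1 - s)))]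
            rw [Finset.sum_neg_distrib, ← Finset.sum_div, ← hsdef]
            ring
          rw [h2]
          by_cases h : k ∈ I <;> simp only [h, if_true, if_false] <;> field_simp <;> ring
        rw [hA, hMl]
      · intro j
        apply div_ne_zero _ hs1
        by_cases h : j ∈ I <;> simp [h, hlne j]
  rw [hset]
  have h2 := Set.ncard_add_ncard_compl {S : Finset (Fin m) | ∑ i ∈ S, l i = 1}
    (Set.toFinite _) (Set.toFinite _)
  rw [Nat.card_eq_fintype_card, Fintype.card_finset, Fintype.card_fin] at h2
  omega


/-- If `M` is an `n × m` `(0,1)`-matrix of rank `m` whose unique solution `λ` of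
`Mλ = 𝟙` has all coordinates nonzero, then the number of subsets `I ⊆ [m]` for which
`z_I(M)` has rank `m` and a solution with all coordinates nonzero equals
`2^m − |U(λ)|`. -/
theorem stmt14 (n m : ℕ)
    (M : Matrix (Fin n) (Fin m) ℝ) (h01 : ∀ i j, M i j = 0 ∨ M i j = 1)
    (hrk : M.rank = m) (l : Fin m → ℝ) (hMl : M.mulVec l = 1)
    (hlne : ∀ i, l i ≠ 0) :
    {I : Finset (Fin m) | (zI M I).rank = m ∧
        ∃ μ : Fin m → ℝ, (zI M I).mulVec μ = 1 ∧ ∀ i, μ i ≠ 0}.ncard =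
      2 ^ m - (unifSets m l).ncard := by
  have h : unifSets m l = {S : Finset (Fin m) | ∑ i ∈ S, l i = 1} := rfl
  rw [h]
  exact stmt14' n m M h01 hrk l hMl hlne
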